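/- Let A = (A_1,…,A_n) be an allocation of indivisible items whose envy graph has no positive-weight directed cycle. For each agent i, let ℓ(i) denote the maximum total weight of a directed path in the envy graph starting at node i (the empty path, of weight 0, is allowed). Then ℓ(i) ≥ 0 for every i, and the payments p_i = ℓ(i) make the allocation envy-free with money: u_i(A_i) + ℓ(i) ≥ u_i(A_j) + ℓ(j) for all agents i, j. -/

import Mathlib

lemma inj_prepend {n k : ℕ} {i : Fin n} {c : Fin (k + 1) → Fin n}
    (hc : Function.Injective c) (hi : ∀ t, c t ≠ i) :
    Function.Injective (Fin.cases i c : Fin (k + 2) → Fin n) := by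
  intro a b hab
  cases a using Fin.cases with
  | zero =>
    cases b using Fin.cases with
    | zero => rfl
    | succ b => simp only [Fin.cases_zero, Fin.cases_succ] at hab
                exact absurd hab.symm (hi b)
  | succ a =>
    cases b using Fin.cases with
    | zero => simp only [Fin.cases_zero, Fin.cases_succ] at hab
              exact absurd hab (hi a)
    | succ b => simp only [Fin.cases_succ] at hab
                exact congrArg Fin.succ (hc hab)

lemma key_lemma (n : ℕ) (w : Fin n → Fin n → ℝ) (hww : ∀ a, w a a = 0)
    (hNoPos : ∀ (k : ℕ), ∀ c : Fin (k + 2) → Fin n, Function.Injective c →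
      (∑ t : Fin (k + 2), w (c t) (c (t + 1))) ≤ 0)
    (ℓ : Fin n → ℝ)
    (hℓ : ∀ i : Fin n, IsGreatest
      {x : ℝ | ∃ (k : ℕ) (c : Fin (k + 1) → Fin n),
        Function.Injective c ∧ c 0 = i ∧
        x = ∑ t : Fin k, w (c t.castSucc) (c t.succ)} (ℓ i)) :
    (∀ i, 0 ≤ ℓ i) ∧ (∀ i j : Fin n, ℓ j + w i j ≤ ℓ i) := by
  have hnonneg : ∀ i, 0 ≤ ℓ i := by
    intro i
    refine (hℓ i).2 ⟨0, fun _ => i, ?_, rfl, by simp⟩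
    intro a b _
    have := a.isLt; have := b.isLt
    exact Fin.ext (by omega)
  refine ⟨hnonneg, fun i j => ?_⟩
  -- maximum path from j
  obtain ⟨k, c, hinj, hc0, hsum⟩ := (hℓ j).1
  -- F t : weight of edge t along the path
  obtain ⟨F, hFeq⟩ : ∃ F : ℕ → ℝ, ∀ (t : ℕ) (h : t + 1 ≤ k),
      F t = w (c ⟨t, by omega⟩) (c ⟨t + 1, by omega⟩) :=
    ⟨fun t => if h : t + 1 ≤ k then w (c ⟨t, by omega⟩) (c ⟨t + 1, by omega⟩) else 0,
      fun t h => by simp only [dif_pos h]⟩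
  have hℓj : ℓ j = ∑ t ∈ Finset.range k, F t := by
    rw [hsum, ← Fin.sum_univ_eq_sum_range]
    refine Finset.sum_congr rfl fun t _ => ?_
    have ht := t.isLt
    rw [hFeq t.val (by omega)]
    congr 1 <;> exact congrArg c (Fin.ext (by simp))
  by_cases hmem : ∃ m : Fin (k + 1), c m = i
  · obtain ⟨m, hm⟩ := hmem
    have hmk := m.isLt
    by_cases hm0 : m.val = 0
    · -- then i = j
      have : i = j := by
        rw [← hm, ← hc0]; exact congrArg c (Fin.ext (by simp [hm0]))
      rw [this, hww]; linarith
    · -- suffix path from i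
      have hSle : (∑ t : Fin (k - m.val),
          w (c ⟨m.val + ((t.castSucc : Fin (k - m.val + 1)) : ℕ), by
                have := t.isLt; omega⟩)
            (c ⟨m.val + ((t.succ : Fin (k - m.val + 1)) : ℕ), by
                have := t.isLt; omega⟩)) ≤ ℓ i := by
        refine (hℓ i).2 ⟨k - m.val,
          fun t => c ⟨m.val + t.val, by have := t.isLt; omega⟩, ?_, ?_, rfl⟩
        · intro a b hab
          have := a.isLt; have := b.isLt
          have := hinj hab
          have : m.val + a.val = m.val + b.val := congrArg Fin.val this
          exact Fin.ext (by omega)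
        · rw [← hm]; exact congrArg c (Fin.ext (by simp))
      have hSsum : (∑ t : Fin (k - m.val),
          w (c ⟨m.val + ((t.castSucc : Fin (k - m.val + 1)) : ℕ), by
                have := t.isLt; omega⟩)
            (c ⟨m.val + ((t.succ : Fin (k - m.val + 1)) : ℕ), by
                have := t.isLt; omega⟩))
          = ∑ t ∈ Finset.range (k - m.val), F (m.val + t) := by
        rw [← Fin.sum_univ_eq_sum_range (fun t => F (m.val + t))]
        refine Finset.sum_congr rfl fun t _ => ?_
        have ht := t.isLt
        rw [hFeq (m.val + t.val) (by omega)]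
        congr 1 <;> exact congrArg c (Fin.ext (by simp)) <;> ring
      -- cycle : prefix plus the edge i -> j
      obtain ⟨m', hm'⟩ : ∃ m', m.val = m' + 1 := ⟨m.val - 1, by omega⟩
      have hcyc := hNoPos m' (fun t => c ⟨t.val, by have := t.isLt; omega⟩)
        (by intro a b hab
            have := a.isLt; have := b.isLt
            have := congrArg Fin.val (hinj hab)
            exact Fin.ext (by simpa using this))
      have hcycsum : (∑ t : Fin (m' + 2),
          w (c ⟨(t : ℕ), by have := t.isLt; omega⟩)
            (c ⟨((t + 1 : Fin (m' + 2)) : ℕ), by have := (t+1).isLt; omega⟩))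
          = (∑ t ∈ Finset.range m.val, F t) + w i j := by
        rw [Fin.sum_univ_castSucc]
        congr 1
        · rw [show Finset.range m.val = Finset.range (m' + 1) by rw [hm'], ← Fin.sum_univ_eq_sum_range]
          refine Finset.sum_congr rfl fun t _ => ?_
          have ht := t.isLt
          rw [hFeq t.val (by omega)]
          have hv : ((t.castSucc + 1 : Fin (m' + 2)) : ℕ) = t.val + 1 := by
            simp [Fin.add_def, Nat.mod_eq_of_lt (by omega : t.val + 1 < m' + 2)]
          congr 1 <;>
            first
              | rfl
              | exact congrArg c (Fin.ext (by simp [hv]))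
              | exact Fin.ext (by simp [hv])
        · have h1 : ((Fin.last (m' + 1) + 1 : Fin (m' + 2)) : ℕ) = 0 := by
            simp [Fin.add_def, Fin.last]
          congr 1
          · rw [← hm]; exact congrArg c (Fin.ext (by simp [Fin.last, hm']))
          · rw [← hc0]; exact congrArg c (Fin.ext (by simp [h1]))
      rw [hcycsum] at hcyc
      have hsplit : ∑ t ∈ Finset.range k, F t
          = (∑ t ∈ Finset.range m.val, F t) + ∑ t ∈ Finset.range (k - m.val), F (m.val + t) := by
        have h2 := Finset.sum_range_add F m.val (k - m.val)
        have h3 : m.val + (k - m.val) = k := by omega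
        rw [h3] at h2
        exact h2
      rw [hℓj, hsplit]
      rw [hSsum] at hSle
      linarith
  · -- i not on the path: prepend i
    push_neg at hmem
    have hPle : (∑ t : Fin (k + 1),
        w ((Fin.cases i c : Fin (k + 2) → Fin n) t.castSucc)
          ((Fin.cases i c : Fin (k + 2) → Fin n) t.succ)) ≤ ℓ i :=
      (hℓ i).2 ⟨k + 1, Fin.cases i c, inj_prepend hinj hmem, by simp, rfl⟩
    have hPsum : (∑ t : Fin (k + 1),
        w ((Fin.cases i c : Fin (k + 2) → Fin n) t.castSucc)
          ((Fin.cases i c : Fin (k + 2) → Fin n) t.succ))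
        = w i j + ∑ t : Fin k, w (c t.castSucc) (c t.succ) := by
      rw [Fin.sum_univ_succ]
      congr 1
      all_goals
        first
          | (show w (Fin.cases i c (Fin.castSucc 0)) (Fin.cases i c (Fin.succ 0)) = w i j
             rw [Fin.castSucc_zero, Fin.cases_zero, Fin.cases_succ, hc0])
          | (refine Finset.sum_congr rfl fun t _ => ?_
             show w (Fin.cases i c (Fin.castSucc (Fin.succ t)))
               (Fin.cases i c (Fin.succ (Fin.succ t))) = _
             rw [← Fin.succ_castSucc, Fin.cases_succ, Fin.cases_succ])
    rw [hPsum, ← hsum] at hPle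
    linarith


/-- If the envy graph of allocation `A` has no positive-weight directed cycle
and `ℓ i` is the maximum total weight of a directed (simple) path starting at `i` (the empty
path of weight `0` being allowed; a path is an injective `c : Fin (k+1) → Fin n` with
`c 0 = i`), then `ℓ i ≥ 0` for every `i` and the payments `p_i = ℓ i` make the allocation
envy-free with money. -/
theorem heaviest_path_payments_envy_free
    (n : ℕ) (I : Type) [Fintype I] [DecidableEq I]
    (u : Fin n → I → ℝ)
    (A : Fin n → Finset I)
    (hA_disj : ∀ i j, i ≠ j → Disjoint (A i) (A j))
    (hA_cover : Finset.univ.biUnion A = Finset.univ)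
    -- the envy graph has no positive-weight directed cycle
    (hNoPos : ∀ (k : ℕ), ∀ c : Fin (k + 2) → Fin n, Function.Injective c →
      (∑ t : Fin (k + 2),
        ((∑ s ∈ A (c (t + 1)), u (c t) s) - (∑ s ∈ A (c t), u (c t) s))) ≤ 0)
    -- ℓ i is the maximum weight of a directed path starting at i
    (ℓ : Fin n → ℝ)
    (hℓ : ∀ i : Fin n, IsGreatest
      {x : ℝ | ∃ (k : ℕ) (c : Fin (k + 1) → Fin n),
        Function.Injective c ∧ c 0 = i ∧
        x = ∑ t : Fin k,
          ((∑ s ∈ A (c t.succ), u (c t.castSucc) s) -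
            (∑ s ∈ A (c t.castSucc), u (c t.castSucc) s))}
      (ℓ i)) :
    (∀ i, 0 ≤ ℓ i) ∧
    (∀ i j : Fin n, (∑ t ∈ A i, u i t) + ℓ i ≥ (∑ t ∈ A j, u i t) + ℓ j) := by
  obtain ⟨h1, h2⟩ := key_lemma n
    (fun a b => (∑ s ∈ A b, u a s) - (∑ s ∈ A a, u a s))
    (fun a => by simp) hNoPos ℓ hℓ
  exact ⟨h1, fun i j => by have := h2 i j; linarith⟩
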